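/- Let G be a finite abelian group admitting a nondegenerate alternating ℤ-bilinear pairing β : G × G → ℚ/ℤ. Then G is of symmetric type: there exists a finite abelian group H with G ≅ H × H. In particular, the order of G is a perfect square. -/

import Mathlib

open AddSubgroup

universe u

set_option maxHeartbeats 1000000 in
private lemma symp_aux : ∀ (n : ℕ) (G : Type u) [AddCommGroup G] [Finite G]
    (B : G →+ G →+ AddCircle (1 : ℚ)),
    Nat.card G = n → (∀ x, B x x = 0) → (∀ x, (∀ y, B x y = 0) → x = 0) →
    ∃ (H : Type u) (_ : AddCommGroup H) (_ : Finite H), Nonempty (G ≃+ H × H) := by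
  intro n
  induction n using Nat.strong_induction_on with
  | _ n IH =>
  intro G _ _ B hn halt hnd
  haveI : Fact ((0 : ℚ) < 1) := ⟨one_pos⟩
  rcases subsingleton_or_nontrivial G with hG | hG
  · refine ⟨PUnit, inferInstance, inferInstance, ⟨{
      toFun := fun _ => default
      invFun := fun _ => 0
      left_inv := fun x => Subsingleton.elim _ _
      right_inv := fun x => Subsingleton.elim _ _
      map_add' := fun _ _ => Subsingleton.elim _ _ }⟩⟩
  -- basic bilinearity helpers
  have hBl : ∀ (m : ℤ) (x y : G), B (m • x) y = m • B x y := by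
    intro m x y
    rw [← AddMonoidHom.flip_apply, map_zsmul, AddMonoidHom.flip_apply]
  have hBln : ∀ (m : ℕ) (x y : G), B (m • x) y = m • B x y := by
    intro m x y
    rw [← AddMonoidHom.flip_apply, map_nsmul, AddMonoidHom.flip_apply]
  have hanti : ∀ x y : G, B y x = - B x y := by
    intro x y
    have h := halt (x + y)
    simp only [map_add, AddMonoidHom.add_apply, halt x, halt y, zero_add, add_zero] at h
    exact eq_neg_of_add_eq_zero_left h
  set e := AddMonoid.exponent G with he_def
  have he1 : 1 < e := AddMonoid.one_lt_exponent
  have he0 : 0 < e := by omega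
  have hex : ∀ x : G, e • x = 0 := fun x => AddMonoid.exponent_nsmul_eq_zero x
  -- the canonical element of order e in ℚ/ℤ
  set τ : AddCircle (1 : ℚ) := (↑((↑(1:ℕ) : ℚ) / (e : ℚ) * (1 : ℚ)) : AddCircle (1 : ℚ)) with hτ_def
  have hτ : addOrderOf τ = e :=
    AddCircle.addOrderOf_div_of_gcd_eq_one he0 (Nat.gcd_one_left e)
  have hτe : (e : ℤ) • τ = 0 := by
    have := addOrderOf_nsmul_eq_zero τ
    rw [hτ] at this
    simpa [natCast_zsmul] using this
  -- every e-torsion element of ℚ/ℤ is a multiple of τ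
  have htor : ∀ u : AddCircle (1 : ℚ), e • u = 0 → ∃ m : ℤ, m • τ = u := by
    intro u hu
    obtain ⟨q, rfl⟩ := QuotientAddGroup.mk_surjective u
    rw [show ((QuotientAddGroup.mk q : AddCircle (1:ℚ))) = (↑q : AddCircle (1:ℚ)) from rfl] at hu ⊢
    rw [← AddCircle.coe_nsmul, AddCircle.coe_eq_zero_iff] at hu
    obtain ⟨m, hm⟩ := hu
    refine ⟨m, ?_⟩
    rw [hτ_def, ← AddCircle.coe_zsmul]
    congr 1
    have heq : (e : ℚ) ≠ 0 := by positivity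
    have hm' : (m : ℚ) = e * q := by
      rw [zsmul_eq_mul, mul_one] at hm
      rw [hm, nsmul_eq_mul]
    have hgoal : (m : ℚ) * ((↑(1:ℕ) : ℚ) / (e : ℚ) * 1) = q := by
      rw [hm']; field_simp; simp
    simpa [zsmul_eq_mul] using hgoal
  have horder : ∀ k : ℤ, k • τ = 0 → (e : ℤ) ∣ k := by
    intro k hk
    have := (addOrderOf_dvd_iff_zsmul_eq_zero (x := τ)).mpr hk
    rwa [hτ] at this
  -- choose g of maximal order
  obtain ⟨g, hg⟩ := AddMonoid.exists_addOrderOf_eq_exponent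
    (AddMonoid.ExponentExists.of_finite (G := G))
  -- the image of B g is cyclic inside the multiples of τ
  have hrange_le : (B g).range ≤ zmultiples τ := by
    rintro _ ⟨y, rfl⟩
    have : e • B g y = 0 := by rw [← map_nsmul, hex, map_zero]
    obtain ⟨m, hm⟩ := htor _ this
    exact ⟨m, hm⟩
  haveI hcyc_zm : IsAddCyclic (zmultiples τ) := by
    refine ⟨⟨τ, mem_zmultiples τ⟩, ?_⟩
    rintro ⟨x, k, rfl⟩
    exact ⟨k, Subtype.ext rfl⟩
  haveI : IsAddCyclic ((B g).range) := AddSubgroup.isAddCyclic_of_le hrange_le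
  obtain ⟨s, hs⟩ := IsAddCyclic.exists_generator (α := (B g).range)
  -- s generates the image; its order is e
  have hse : e • (s : AddCircle (1:ℚ)) = 0 := by
    obtain ⟨m, hm⟩ := hrange_le s.2
    rw [← hm, smul_comm]
    rw [show e • τ = (e:ℤ) • τ by rw [natCast_zsmul], hτe, smul_zero]
  have hms : addOrderOf (s : AddCircle (1:ℚ)) ∣ e := addOrderOf_dvd_of_nsmul_eq_zero hse
  have hsm : e ∣ addOrderOf (s : AddCircle (1:ℚ)) := by
    set m := addOrderOf (s : AddCircle (1:ℚ)) with hm_def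
    have hmg : m • g = 0 := by
      apply hnd
      intro y
      have hy : B g y ∈ (B g).range := ⟨y, rfl⟩
      obtain ⟨k, hk⟩ := hs ⟨B g y, hy⟩
      have hk' : k • (s : AddCircle (1:ℚ)) = B g y := congrArg Subtype.val hk
      rw [hBln, ← hk', smul_comm]
      rw [show m • (s : AddCircle (1:ℚ)) = 0 from addOrderOf_nsmul_eq_zero _, smul_zero]
    rw [he_def, ← hg]
    exact addOrderOf_dvd_of_nsmul_eq_zero hmg
  have hsord : addOrderOf (s : AddCircle (1:ℚ)) = e := Nat.dvd_antisymm hms hsm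
  obtain ⟨h₀, hh₀⟩ := s.2
  -- adjust h₀ so that B g h = τ
  obtain ⟨c, hclt, hcg, hc⟩ := (AddCircle.addOrderOf_eq_pos_iff he0).mp hsord
  obtain ⟨h, hgh⟩ : ∃ h : G, B g h = τ := by
    -- Bezout: a * c + b * e = 1
    have hbez : (c : ℤ) * Nat.gcdA c e + (e : ℤ) * Nat.gcdB c e = 1 := by
      have h1 := Nat.gcd_eq_gcd_ab c e
      rw [hcg] at h1
      push_cast at h1
      linarith
    refine ⟨Nat.gcdA c e • h₀, ?_⟩
    rw [map_zsmul, hh₀, ← hc]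
    set a := Nat.gcdA c e
    set b := Nat.gcdB c e
    rw [← AddCircle.coe_zsmul]
    have : (a • ((c : ℚ) / (e : ℚ) * 1) : ℚ) - ((↑(1:ℕ) : ℚ) / (e : ℚ) * 1) = (-b) • (1 : ℚ) := by
      have heq : (e : ℚ) ≠ 0 := by positivity
      have hcast : ((a : ℚ)) * c + (e : ℚ) * b = 1 := by
        have h2 : (a * (c:ℤ) + (e:ℤ) * b : ℤ) = 1 := by linarith [hbez]
        exact_mod_cast h2
      simp only [zsmul_eq_mul]
      field_simp
      push_cast
      linarith [hcast]
    have hz : ((a • ((c : ℚ) / (e : ℚ) * 1) - ((↑(1:ℕ) : ℚ) / (e : ℚ) * 1) : ℚ) : AddCircle (1:ℚ)) = 0 := by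
      rw [AddCircle.coe_eq_zero_iff]
      exact ⟨-b, this.symm⟩
    rw [AddCircle.coe_sub] at hz
    rw [sub_eq_zero] at hz
    exact hz
  -- rank-2 block data
  have hBgg : B g g = 0 := halt g
  have hBhh : B h h = 0 := halt h
  have hBhg : B h g = -τ := by rw [hanti g h, hgh]
  have hBg_lin : ∀ (m k : ℤ), B g (m • g + k • h) = k • τ := by
    intro m k
    rw [map_add, map_zsmul, map_zsmul, hBgg, hgh, smul_zero, zero_add]
  have hBh_lin : ∀ (m k : ℤ), B h (m • g + k • h) = -(m • τ) := by
    intro m k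
    rw [map_add, map_zsmul, map_zsmul, hBhg, hBhh, smul_zero, add_zero, smul_neg]
  have hsmul_zero : ∀ (k : ℤ) (x : G), (e : ℤ) ∣ k → k • x = 0 := by
    rintro k x ⟨c, rfl⟩
    rw [mul_smul, natCast_zsmul, hex]
  haveI : NeZero e := ⟨he0.ne'⟩
  set f₁ : ZMod e →+ G := ZMod.lift e ⟨(zmultiplesHom G) g, by simp [natCast_zsmul, hex]⟩ with hf₁
  set f₂ : ZMod e →+ G := ZMod.lift e ⟨(zmultiplesHom G) h, by simp [natCast_zsmul, hex]⟩ with hf₂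
  set ψ : ZMod e × ZMod e →+ G := f₁.coprod f₂ with hψdef
  have hψ : ∀ m k : ℤ, ψ ((m : ZMod e), (k : ZMod e)) = m • g + k • h := by
    intro m k
    rw [hψdef, AddMonoidHom.coprod_apply, hf₁, hf₂]
    simp [ZMod.lift_coe, zmultiplesHom_apply]
  set P : Submodule ℤ G := LinearMap.range ψ.toIntLinearMap with hP
  set Q : Submodule ℤ G := LinearMap.ker (B g).toIntLinearMap ⊓ LinearMap.ker (B h).toIntLinearMap
    with hQ
  have hmemQ : ∀ x : G, x ∈ Q ↔ (B g x = 0 ∧ B h x = 0) := by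
    intro x
    simp only [hQ, Submodule.mem_inf, LinearMap.mem_ker, AddMonoidHom.coe_toIntLinearMap]
  have hdecomp : ∀ x : G, ∃ (m k : ℤ) (z : G), z ∈ Q ∧ x = (m • g + k • h) + z := by
    intro x
    obtain ⟨k1, hk1⟩ := htor (B g x) (by rw [← map_nsmul, hex, map_zero])
    obtain ⟨m1, hm1⟩ := htor (B h x) (by rw [← map_nsmul, hex, map_zero])
    refine ⟨-m1, k1, x - ((-m1) • g + k1 • h), ?_, by abel⟩
    rw [hmemQ]
    have hbh : B h ((-m1) • g + k1 • h) = m1 • τ := by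
      rw [hBh_lin, neg_zsmul, neg_neg]
    constructor
    · rw [map_sub, hBg_lin, hk1, sub_self]
    · rw [map_sub, hbh, hm1, sub_self]
  have hcore : ∀ m k : ℤ, (m • g + k • h ∈ Q) → ((e : ℤ) ∣ m ∧ (e : ℤ) ∣ k) := by
    intro m k hmk
    rw [hmemQ] at hmk
    obtain ⟨h1, h2⟩ := hmk
    rw [hBg_lin] at h1
    rw [hBh_lin, neg_eq_zero] at h2
    exact ⟨horder m h2, horder k h1⟩
  have hψinj : Function.Injective ψ := by
    rw [injective_iff_map_eq_zero]
    rintro ⟨p1, p2⟩ hp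
    obtain ⟨m, rfl⟩ := ZMod.intCast_surjective p1
    obtain ⟨k, rfl⟩ := ZMod.intCast_surjective p2
    rw [hψ] at hp
    have hd := hcore m k (by rw [hp]; exact Q.zero_mem)
    exact Prod.ext ((ZMod.intCast_zmod_eq_zero_iff_dvd m e).mpr hd.1)
      ((ZMod.intCast_zmod_eq_zero_iff_dvd k e).mpr hd.2)
  have hcompl : IsCompl P Q := by
    constructor
    · rw [Submodule.disjoint_def]
      rintro x ⟨⟨p1, p2⟩, rfl⟩ hxQ
      obtain ⟨m, rfl⟩ := ZMod.intCast_surjective p1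
      obtain ⟨k, rfl⟩ := ZMod.intCast_surjective p2
      have hx : ψ.toIntLinearMap ((m : ZMod e), (k : ZMod e)) = m • g + k • h := hψ m k
      rw [hx] at hxQ ⊢
      obtain ⟨d1, d2⟩ := hcore m k hxQ
      rw [hsmul_zero m g d1, hsmul_zero k h d2, add_zero]
    · rw [codisjoint_iff, eq_top_iff]
      intro x _
      obtain ⟨m, k, z, hzQ, rfl⟩ := hdecomp x
      exact Submodule.add_mem_sup ⟨((m : ZMod e), (k : ZMod e)), hψ m k⟩ hzQ
  have eq1 : (↥P × ↥Q) ≃ₗ[ℤ] G := Submodule.prodEquivOfIsCompl P Q hcompl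
  have eqP : (ZMod e × ZMod e) ≃ₗ[ℤ] ↥P := LinearEquiv.ofInjective ψ.toIntLinearMap hψinj
  -- restricted pairing on Q
  set B' : ↥Q →+ ↥Q →+ AddCircle (1 : ℚ) := AddMonoidHom.mk'
    (fun x => (B x.1).comp Q.subtype.toAddMonoidHom)
    (fun x y => by ext z; simp [map_add]) with hB'
  have hB'app : ∀ x y : ↥Q, B' x y = B x.1 y.1 := fun x y => rfl
  have halt' : ∀ x : ↥Q, B' x x = 0 := fun x => halt x.1
  have hnd' : ∀ x : ↥Q, (∀ y : ↥Q, B' x y = 0) → x = 0 := by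
    intro x hx
    have hx1 : ∀ z : G, z ∈ Q → B x.1 z = 0 := fun z hz => hx ⟨z, hz⟩
    have hxQ := (hmemQ x.1).mp x.2
    have hz : x.1 = 0 := by
      apply hnd
      intro y
      obtain ⟨m, k, z, hzQ, rfl⟩ := hdecomp y
      have h1 : B x.1 g = 0 := by
        rw [show B x.1 g = -(B g x.1) from hanti g x.1, hxQ.1, neg_zero]
      have h2 : B x.1 h = 0 := by
        rw [show B x.1 h = -(B h x.1) from hanti h x.1, hxQ.2, neg_zero]
      rw [map_add, map_add, map_zsmul, map_zsmul, hx1 z hzQ, h1, h2, smul_zero, smul_zero,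
        add_zero, add_zero]
    exact Subtype.ext hz
  -- cardinality bookkeeping
  have hcardP : Nat.card ↥P = e * e := by
    rw [← Nat.card_congr eqP.toEquiv, Nat.card_prod, Nat.card_zmod]
  have hQpos : 0 < Nat.card ↥Q := Nat.card_pos
  have hcardG : n = e * e * Nat.card ↥Q := by
    rw [← hn, ← Nat.card_congr eq1.toEquiv, Nat.card_prod, hcardP]
  have hlt : Nat.card ↥Q < n := by
    rw [hcardG]
    have h4 : 1 < e * e := by nlinarith
    exact (lt_mul_iff_one_lt_left hQpos).mpr h4
  obtain ⟨H', iH', fH', ⟨eQ⟩⟩ := IH (Nat.card ↥Q) hlt ↥Q B' rfl halt' hnd'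
  refine ⟨ZMod e × H', inferInstance, inferInstance, ⟨?_⟩⟩
  exact (eq1.symm.toAddEquiv).trans
    ((AddEquiv.prodCongr eqP.symm.toAddEquiv eQ).trans
      (AddEquiv.prodProdProdComm (ZMod e) (ZMod e) H' H'))

/-- A finite abelian group admitting a nondegenerate alternating `ℤ`-bilinear pairing
with values in `ℚ/ℤ` is of symmetric type: `G ≅ H × H`; in particular `|G|` is a
perfect square. -/
theorem stmt_11 (G : Type*) [AddCommGroup G] [Fintype G]
    (β : G → G → AddCircle (1 : ℚ))
    (hl : ∀ x y z : G, β (x + y) z = β x z + β y z)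
    (hr : ∀ x y z : G, β x (y + z) = β x y + β x z)
    (halt : ∀ x : G, β x x = 0)
    (hnd : ∀ x : G, (∀ y : G, β x y = 0) → x = 0) :
    (∃ H : AddSubgroup G, Nonempty (G ≃+ H × H)) ∧
    ∃ k : ℕ, Fintype.card G = k * k := by
  set B : G →+ G →+ AddCircle (1 : ℚ) := AddMonoidHom.mk'
    (fun x => AddMonoidHom.mk' (β x) (hr x))
    (fun x y => AddMonoidHom.ext fun z => hl x y z) with hB
  have hBapp : ∀ x y : G, B x y = β x y := fun x y => rfl
  obtain ⟨H, iH, fH, ⟨eqv⟩⟩ := symp_aux (Nat.card G) G B rfl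
    (fun x => halt x) (fun x hx => hnd x hx)
  -- transfer `H` to a subgroup of `G`
  set S : AddSubgroup G :=
    AddSubgroup.comap eqv.toAddMonoidHom ((⊤ : AddSubgroup H).prod ⊥) with hS
  have hmemS : ∀ x : G, x ∈ S ↔ (eqv x).2 = 0 := by
    intro x
    simp [hS, AddSubgroup.mem_comap, AddSubgroup.mem_prod]
  have eS : S ≃+ H := by
    refine
      { toFun := fun x => (eqv x.1).1
        invFun := fun y => ⟨eqv.symm (y, 0), by
          rw [hmemS, AddEquiv.apply_symm_apply]⟩
        left_inv := ?_
        right_inv := ?_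
        map_add' := ?_ }
    · intro x
      apply Subtype.ext
      show eqv.symm ((eqv x.1).1, 0) = x.1
      have hx2 : (eqv x.1).2 = 0 := (hmemS x.1).mp x.2
      have hpe : ((eqv x.1).1, (0 : H)) = eqv x.1 := Prod.ext rfl hx2.symm
      rw [hpe, AddEquiv.symm_apply_apply]
    · intro y
      show (eqv (eqv.symm (y, 0))).1 = y
      rw [AddEquiv.apply_symm_apply]
    · intro x y
      simp [map_add]
  constructor
  · exact ⟨S, ⟨eqv.trans (AddEquiv.prodCongr eS.symm eS.symm)⟩⟩
  · refine ⟨Nat.card H, ?_⟩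
    rw [← Nat.card_eq_fintype_card, Nat.card_congr eqv.toEquiv, Nat.card_prod]
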